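/- arXiv:2505.18439 — 2 statements merged into one kernel-verified Lean document; each statement's English description precedes it below -/
import Mathlib

section
/- The function f(r) = 9·(r²/sinh⁴(r) − coth²(r)) + (r²/cosh⁴(r) − tanh²(r)) is strictly increasing on (0,∞). -/
set_option maxHeartbeats 1000000

open Real Set

/-- Sharp upper bound: x·(9c²+18c+33) ≤ s·(5c²+6c+49) for x ≥ 0. -/
private lemma aux_upper {x : ℝ} (hx : 0 ≤ x) :
    x * (9 * Real.cosh x ^ 2 + 18 * Real.cosh x + 33) ≤
      Real.sinh x * (5 * Real.cosh x ^ 2 + 6 * Real.cosh x + 49) := by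
  have hD : ∀ y : ℝ, 0 < 9 * Real.cosh y ^ 2 + 18 * Real.cosh y + 33 := by
    intro y; nlinarith [Real.one_le_cosh y]
  set k : ℝ → ℝ := fun y =>
    Real.sinh y * (5 * Real.cosh y ^ 2 + 6 * Real.cosh y + 49) /
      (9 * Real.cosh y ^ 2 + 18 * Real.cosh y + 33) - y with hk
  have hder : ∀ y : ℝ, HasDerivAt k
      (((Real.cosh y * (5 * Real.cosh y ^ 2 + 6 * Real.cosh y + 49) +
          Real.sinh y * (10 * Real.cosh y * Real.sinh y + 6 * Real.sinh y)) *
            (9 * Real.cosh y ^ 2 + 18 * Real.cosh y + 33) -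
          Real.sinh y * (5 * Real.cosh y ^ 2 + 6 * Real.cosh y + 49) *
            (18 * Real.cosh y * Real.sinh y + 18 * Real.sinh y)) /
          (9 * Real.cosh y ^ 2 + 18 * Real.cosh y + 33) ^ 2 - 1) y := by
    intro y
    have hc := Real.hasDerivAt_cosh y
    have hs := Real.hasDerivAt_sinh y
    have hN : HasDerivAt (fun z => 5 * Real.cosh z ^ 2 + 6 * Real.cosh z + 49)
        (10 * Real.cosh y * Real.sinh y + 6 * Real.sinh y) y := by
      have h := (((hc.pow 2).const_mul (5:ℝ)).add (hc.const_mul (6:ℝ))).add_const (49:ℝ)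
      refine h.congr_deriv ?_
      push_cast
      ring
    have hDp : HasDerivAt (fun z => 9 * Real.cosh z ^ 2 + 18 * Real.cosh z + 33)
        (18 * Real.cosh y * Real.sinh y + 18 * Real.sinh y) y := by
      have h := (((hc.pow 2).const_mul (9:ℝ)).add (hc.const_mul (18:ℝ))).add_const (33:ℝ)
      refine h.congr_deriv ?_
      push_cast
      ring
    have hNum : HasDerivAt (fun z => Real.sinh z * (5 * Real.cosh z ^ 2 + 6 * Real.cosh z + 49))
        (Real.cosh y * (5 * Real.cosh y ^ 2 + 6 * Real.cosh y + 49) +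
          Real.sinh y * (10 * Real.cosh y * Real.sinh y + 6 * Real.sinh y)) y := hs.mul hN
    have hid : HasDerivAt (fun z : ℝ => z) 1 y := hasDerivAt_id y
    exact (hNum.div hDp (hD y).ne').sub hid
  have hmono : MonotoneOn k (Ici 0) := by
    apply monotoneOn_of_deriv_nonneg (convex_Ici 0)
    · intro y _
      exact (hder y).continuousAt.continuousWithinAt
    · intro y _
      exact (hder y).differentiableAt.differentiableWithinAt
    · intro y _
      rw [(hder y).deriv]
      have h2 : Real.sinh y ^ 2 = Real.cosh y ^ 2 - 1 := Real.sinh_sq y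
      have hc1 : 1 ≤ Real.cosh y := Real.one_le_cosh y
      have hDp2 : (0:ℝ) < (9 * Real.cosh y ^ 2 + 18 * Real.cosh y + 33) ^ 2 := by
        have := hD y; positivity
      rw [sub_nonneg, le_div_iff₀ hDp2, one_mul]
      have hval : (Real.cosh y * (5 * Real.cosh y ^ 2 + 6 * Real.cosh y + 49) +
          Real.sinh y * (10 * Real.cosh y * Real.sinh y + 6 * Real.sinh y)) *
            (9 * Real.cosh y ^ 2 + 18 * Real.cosh y + 33) -
          Real.sinh y * (5 * Real.cosh y ^ 2 + 6 * Real.cosh y + 49) *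
            (18 * Real.cosh y * Real.sinh y + 18 * Real.sinh y)
          = (9 * Real.cosh y ^ 2 + 18 * Real.cosh y + 33) ^ 2 +
            (684 * (Real.cosh y - 1) ^ 3 + 324 * (Real.cosh y - 1) ^ 4 +
              45 * (Real.cosh y - 1) ^ 5) := by
        linear_combination ((10 * Real.cosh y + 6) * (9 * Real.cosh y ^ 2 + 18 * Real.cosh y + 33)
          - (18 * Real.cosh y + 18) * (5 * Real.cosh y ^ 2 + 6 * Real.cosh y + 49)) * h2
      rw [hval]
      have hu : (0:ℝ) ≤ Real.cosh y - 1 := by linarith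
      nlinarith [pow_nonneg hu 3, pow_nonneg hu 4, pow_nonneg hu 5]
  have h0 : k 0 ≤ k x := hmono (mem_Ici.mpr le_rfl) (mem_Ici.mpr hx) hx
  have hk0 : k 0 = 0 := by simp [hk]
  rw [hk0] at h0
  have : x ≤ Real.sinh x * (5 * Real.cosh x ^ 2 + 6 * Real.cosh x + 49) /
      (9 * Real.cosh x ^ 2 + 18 * Real.cosh x + 33) := by
    have := h0
    simp only [hk] at this
    linarith
  calc x * (9 * Real.cosh x ^ 2 + 18 * Real.cosh x + 33)
      ≤ (Real.sinh x * (5 * Real.cosh x ^ 2 + 6 * Real.cosh x + 49) /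
          (9 * Real.cosh x ^ 2 + 18 * Real.cosh x + 33)) *
          (9 * Real.cosh x ^ 2 + 18 * Real.cosh x + 33) := by
        exact mul_le_mul_of_nonneg_right this (hD x).le
    _ = Real.sinh x * (5 * Real.cosh x ^ 2 + 6 * Real.cosh x + 49) := by
        field_simp

private lemma main_deriv {r : ℝ} (hr : 0 < r) :
    HasDerivAt (fun y : ℝ => 9 * (y ^ 2 / Real.sinh y ^ 4 - (Real.cosh y / Real.sinh y) ^ 2) +
      (y ^ 2 / Real.cosh y ^ 4 - (Real.sinh y / Real.cosh y) ^ 2))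
    (2 * (Real.sinh r * Real.cosh r * (9 * Real.cosh r ^ 4 + Real.sinh r ^ 4) * r -
          2 * (9 * Real.cosh r ^ 6 + Real.sinh r ^ 6) * r ^ 2 +
          Real.sinh r ^ 2 * Real.cosh r ^ 2 * (9 * Real.cosh r ^ 4 - Real.sinh r ^ 4)) /
      (Real.sinh r ^ 5 * Real.cosh r ^ 5)) r := by
  have hs0 : Real.sinh r ≠ 0 := ne_of_gt (Real.sinh_pos_iff.mpr hr)
  have hc0 : Real.cosh r ≠ 0 := (Real.cosh_pos r).ne'
  have h1 := (hasDerivAt_pow 2 r).div ((Real.hasDerivAt_sinh r).pow 4) (pow_ne_zero 4 hs0)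
  have h2 := ((Real.hasDerivAt_cosh r).div (Real.hasDerivAt_sinh r) hs0).pow 2
  have h3 := (hasDerivAt_pow 2 r).div ((Real.hasDerivAt_cosh r).pow 4) (pow_ne_zero 4 hc0)
  have h4 := ((Real.hasDerivAt_sinh r).div (Real.hasDerivAt_cosh r) hc0).pow 2
  have h := ((h1.sub h2).const_mul (9:ℝ)).add (h3.sub h4)
  have hp := Real.cosh_sq_sub_sinh_sq r
  refine h.congr_deriv ?_
  push_cast
  simp only [Pi.pow_apply, Pi.div_apply]
  field_simp
  linear_combination (18 * Real.cosh r ^ 6 * Real.sinh r ^ 2 -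
    2 * Real.cosh r ^ 2 * Real.sinh r ^ 6) * hp

/-- The function
f(r) = 9·(r²/sinh⁴(r) − coth²(r)) + (r²/cosh⁴(r) − tanh²(r))
is strictly increasing on (0,∞). -/
theorem stmt_17 :
    StrictMonoOn
      (fun r : ℝ =>
        9 * (r ^ 2 / Real.sinh r ^ 4 - (Real.cosh r / Real.sinh r) ^ 2) +
          (r ^ 2 / Real.cosh r ^ 4 - Real.tanh r ^ 2))
      (Set.Ioi (0 : ℝ)) := by
  have htanh : (fun r : ℝ =>
        9 * (r ^ 2 / Real.sinh r ^ 4 - (Real.cosh r / Real.sinh r) ^ 2) +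
          (r ^ 2 / Real.cosh r ^ 4 - Real.tanh r ^ 2))
      = (fun r : ℝ =>
        9 * (r ^ 2 / Real.sinh r ^ 4 - (Real.cosh r / Real.sinh r) ^ 2) +
          (r ^ 2 / Real.cosh r ^ 4 - (Real.sinh r / Real.cosh r) ^ 2)) := by
    funext y
    rw [Real.tanh_eq_sinh_div_cosh]
  rw [htanh]
  apply strictMonoOn_of_deriv_pos (convex_Ioi 0)
  · intro r hr
    exact (main_deriv hr).continuousAt.continuousWithinAt
  · intro r hr
    rw [interior_Ioi] at hr
    rw [(main_deriv hr).deriv]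
    set s := Real.sinh r with hsdef
    set c := Real.cosh r with hcdef
    have hs1 : 0 < s := Real.sinh_pos_iff.mpr hr
    have hc1 : 1 < c := by
      have h2 : s ^ 2 = c ^ 2 - 1 := Real.sinh_sq r
      nlinarith [Real.cosh_pos r, hs1]
    have h2 : s ^ 2 = c ^ 2 - 1 := Real.sinh_sq r
    have hU : r * (9 * c ^ 2 + 18 * c + 33) ≤ s * (5 * c ^ 2 + 6 * c + 49) := aux_upper hr.le
    have hu : (0:ℝ) < c - 1 := by linarith
    -- the key polynomial W > 0
    have hW : 0 < c * (5 * c ^ 2 + 6 * c + 49) * (9 * c ^ 2 + 18 * c + 33) * (9 * c ^ 4 + s ^ 4) -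
        2 * (5 * c ^ 2 + 6 * c + 49) ^ 2 * (9 * c ^ 6 + s ^ 6) +
        c ^ 2 * (9 * c ^ 2 + 18 * c + 33) ^ 2 * (9 * c ^ 4 - s ^ 4) := by
      have e4 : s ^ 4 = (c ^ 2 - 1) ^ 2 := by
        rw [show s ^ 4 = (s ^ 2) ^ 2 by ring, h2]
      have e6 : s ^ 6 = (c ^ 2 - 1) ^ 3 := by
        rw [show s ^ 6 = (s ^ 2) ^ 3 by ring, h2]
      rw [e4, e6]
      have hexp : c * (5 * c ^ 2 + 6 * c + 49) * (9 * c ^ 2 + 18 * c + 33) *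
            (9 * c ^ 4 + (c ^ 2 - 1) ^ 2) -
          2 * (5 * c ^ 2 + 6 * c + 49) ^ 2 * (9 * c ^ 6 + (c ^ 2 - 1) ^ 3) +
          c ^ 2 * (9 * c ^ 2 + 18 * c + 33) ^ 2 * (9 * c ^ 4 - (c ^ 2 - 1) ^ 2)
          = 23040 * (c-1)^2 + 50244 * (c-1)^3 + 116616 * (c-1)^4 + 187283 * (c-1)^5 +
            162515 * (c-1)^6 + 78482 * (c-1)^7 + 21814 * (c-1)^8 + 3322 * (c-1)^9 +
            148 * (c-1)^10 := by ring
      rw [hexp]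
      nlinarith [pow_pos hu 2, pow_pos hu 3, pow_pos hu 4, pow_pos hu 5, pow_pos hu 6,
        pow_pos hu 7, pow_pos hu 8, pow_pos hu 9, pow_pos hu 10]
    have hD0 : 0 ≤ s ^ 2 * c ^ 2 * (9 * c ^ 4 - s ^ 4) := by
      have hs2c2 : s ^ 2 ≤ c ^ 2 := by nlinarith
      have h44 : s ^ 4 ≤ c ^ 4 := by nlinarith [sq_nonneg s, sq_nonneg c]
      have : (0:ℝ) ≤ 9 * c ^ 4 - s ^ 4 := by nlinarith [pow_pos (by linarith : (0:ℝ) < c) 4]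
      positivity
    have hB : (0:ℝ) ≤ 9 * c ^ 6 + s ^ 6 := by positivity
    have hNp : (0:ℝ) < 5 * c ^ 2 + 6 * c + 49 := by nlinarith
    have hDp : (0:ℝ) < 9 * c ^ 2 + 18 * c + 33 := by nlinarith
    set P := s * c * (9 * c ^ 4 + s ^ 4) * r - 2 * (9 * c ^ 6 + s ^ 6) * r ^ 2 +
      s ^ 2 * c ^ 2 * (9 * c ^ 4 - s ^ 4) with hPdef
    have hid : P * ((9 * c ^ 2 + 18 * c + 33) ^ 2 * (s * (5 * c ^ 2 + 6 * c + 49)))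
        = r * (9 * c ^ 2 + 18 * c + 33) *
            (s ^ 2 * (c * (5 * c ^ 2 + 6 * c + 49) * (9 * c ^ 2 + 18 * c + 33) * (9 * c ^ 4 + s ^ 4) -
              2 * (5 * c ^ 2 + 6 * c + 49) ^ 2 * (9 * c ^ 6 + s ^ 6) +
              c ^ 2 * (9 * c ^ 2 + 18 * c + 33) ^ 2 * (9 * c ^ 4 - s ^ 4)))
          + (s * (5 * c ^ 2 + 6 * c + 49) - r * (9 * c ^ 2 + 18 * c + 33)) *
              ((9 * c ^ 2 + 18 * c + 33) ^ 2 * (s ^ 2 * c ^ 2 * (9 * c ^ 4 - s ^ 4)))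
          + 2 * (9 * c ^ 6 + s ^ 6) * r * (s * (5 * c ^ 2 + 6 * c + 49)) *
              (s * (5 * c ^ 2 + 6 * c + 49) - r * (9 * c ^ 2 + 18 * c + 33)) *
              (9 * c ^ 2 + 18 * c + 33) := by
      rw [hPdef]; ring
    have hK : 0 < (9 * c ^ 2 + 18 * c + 33) ^ 2 * (s * (5 * c ^ 2 + 6 * c + 49)) :=
      mul_pos (pow_pos hDp 2) (mul_pos hs1 hNp)
    have ht1 : 0 < r * (9 * c ^ 2 + 18 * c + 33) *
        (s ^ 2 * (c * (5 * c ^ 2 + 6 * c + 49) * (9 * c ^ 2 + 18 * c + 33) * (9 * c ^ 4 + s ^ 4) -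
          2 * (5 * c ^ 2 + 6 * c + 49) ^ 2 * (9 * c ^ 6 + s ^ 6) +
          c ^ 2 * (9 * c ^ 2 + 18 * c + 33) ^ 2 * (9 * c ^ 4 - s ^ 4))) :=
      mul_pos (mul_pos hr hDp) (mul_pos (pow_pos hs1 2) hW)
    have ht2 : 0 ≤ (s * (5 * c ^ 2 + 6 * c + 49) - r * (9 * c ^ 2 + 18 * c + 33)) *
        ((9 * c ^ 2 + 18 * c + 33) ^ 2 * (s ^ 2 * c ^ 2 * (9 * c ^ 4 - s ^ 4))) :=
      mul_nonneg (by linarith) (mul_nonneg (by positivity) hD0)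
    have ht3 : 0 ≤ 2 * (9 * c ^ 6 + s ^ 6) * r * (s * (5 * c ^ 2 + 6 * c + 49)) *
        (s * (5 * c ^ 2 + 6 * c + 49) - r * (9 * c ^ 2 + 18 * c + 33)) *
        (9 * c ^ 2 + 18 * c + 33) := by
      apply mul_nonneg
      apply mul_nonneg
      apply mul_nonneg
      · apply mul_nonneg (by linarith) hr.le
      · exact (mul_pos hs1 hNp).le
      · linarith
      · linarith
    have hPK : 0 < P * ((9 * c ^ 2 + 18 * c + 33) ^ 2 * (s * (5 * c ^ 2 + 6 * c + 49))) := by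
      rw [hid]; linarith
    have hP : 0 < P := by
      rcases mul_pos_iff.mp hPK with ⟨h, _⟩ | ⟨_, h⟩
      · exact h
      · linarith
    have : (0:ℝ) < 2 * P := by linarith
    exact div_pos (by rw [hPdef] at this ⊢; linarith) (by positivity)
end

section
/- For every k ∈ {2,4,8} and every integer n ≥ 2, the function r ↦ r²·((kn−1)/sinh²(r) − (k−1)/cosh²(r)) is strictly decreasing on (0,∞). -/
open Real Set

lemma aux_sinh_lt (x : ℝ) (hx : 0 < x) : Real.sinh x < x * Real.cosh x := by
  have h : StrictMonoOn (fun t : ℝ => t * Real.cosh t - Real.sinh t) (Set.Ici 0) := by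
    apply strictMonoOn_of_deriv_pos (convex_Ici 0)
    · exact ((continuous_id.mul Real.continuous_cosh).sub Real.continuous_sinh).continuousOn
    · intro t ht
      rw [interior_Ici] at ht
      have h1 : HasDerivAt (fun t : ℝ => t * Real.cosh t - Real.sinh t)
          (1 * Real.cosh t + t * Real.sinh t - Real.cosh t) t :=
        ((hasDerivAt_id t).mul (Real.hasDerivAt_cosh t)).sub (Real.hasDerivAt_sinh t)
      rw [h1.deriv]
      have ht0 := Set.mem_Ioi.1 ht
      have := mul_pos ht0 (Real.sinh_pos_iff.2 ht0)
      linarith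
  have h0 := h Set.self_mem_Ici (Set.mem_Ici.2 hx.le) hx
  simp at h0
  linarith

lemma aux_mono : StrictMonoOn (fun r : ℝ => Real.sinh r / r) (Set.Ioi 0) := by
  apply strictMonoOn_of_deriv_pos (convex_Ioi 0)
  · exact Real.continuous_sinh.continuousOn.div continuousOn_id
      (fun x hx => ne_of_gt (Set.mem_Ioi.1 hx))
  · intro t ht
    rw [interior_Ioi] at ht
    have ht0 := Set.mem_Ioi.1 ht
    have h1 : HasDerivAt (fun r : ℝ => Real.sinh r / r)
        ((Real.cosh t * t - Real.sinh t * 1) / t ^ 2) t :=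
      (Real.hasDerivAt_sinh t).div (hasDerivAt_id t) (ne_of_gt ht0)
    rw [h1.deriv]
    have := aux_sinh_lt t ht0
    have : 0 < Real.cosh t * t - Real.sinh t * 1 := by linarith
    positivity

lemma aux_g_anti {x y : ℝ} (hx : 0 < x) (hxy : x < y) :
    y ^ 2 / Real.sinh y ^ 2 < x ^ 2 / Real.sinh x ^ 2 := by
  have hy : 0 < y := hx.trans hxy
  have hsx := Real.sinh_pos_iff.2 hx
  have hsy := Real.sinh_pos_iff.2 hy
  have h := aux_mono (Set.mem_Ioi.2 hx) (Set.mem_Ioi.2 hy) hxy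
  simp only at h
  rw [div_lt_div_iff₀ hx hy] at h
  rw [div_lt_div_iff₀ (by positivity) (by positivity)]
  have h2 := mul_lt_mul'' h h (by positivity) (by positivity)
  nlinarith [h2]

/-- For every k ∈ {2,4,8} and every integer n ≥ 2, the function
r ↦ r²·((kn−1)/sinh²(r) − (k−1)/cosh²(r)) is strictly decreasing on (0,∞). -/
theorem stmt_18 (k n : ℕ) (hk : k = 2 ∨ k = 4 ∨ k = 8) (hn : 2 ≤ n) :
    StrictAntiOn
      (fun r : ℝ =>
        r ^ 2 * (((k : ℝ) * n - 1) / Real.sinh r ^ 2 - ((k : ℝ) - 1) / Real.cosh r ^ 2))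
      (Set.Ioi (0 : ℝ)) := by
  have hk2 : (2:ℝ) ≤ k := by rcases hk with h|h|h <;> subst h <;> norm_num
  have hn2 : (2:ℝ) ≤ n := by exact_mod_cast hn
  have hB : 0 < (k:ℝ) - 1 := by linarith
  have hAB : 0 < ((k:ℝ) * n - 1) - ((k:ℝ) - 1) := by nlinarith
  have key : ∀ r : ℝ, 0 < r →
      r ^ 2 * (((k : ℝ) * n - 1) / Real.sinh r ^ 2 - ((k : ℝ) - 1) / Real.cosh r ^ 2)
        = (((k:ℝ) * n - 1) - ((k:ℝ) - 1)) * (r ^ 2 / Real.sinh r ^ 2)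
          + ((k:ℝ) - 1) * ((2*r) ^ 2 / Real.sinh (2*r) ^ 2) := by
    intro r hr
    have hs := Real.sinh_pos_iff.2 hr
    have hc := Real.cosh_pos r
    have hsc := Real.cosh_sq_sub_sinh_sq r
    rw [Real.sinh_two_mul]
    field_simp
    linear_combination ((k:ℝ)-1) * hsc
  intro x hx y hy hxy
  have hx0 := Set.mem_Ioi.1 hx
  have hy0 := Set.mem_Ioi.1 hy
  simp only []
  rw [key x hx0, key y hy0]
  have g1 := aux_g_anti hx0 hxy
  have g2 := aux_g_anti (by linarith : (0:ℝ) < 2*x) (by linarith : 2*x < 2*y)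
  exact add_lt_add (mul_lt_mul_of_pos_left g1 hAB) (mul_lt_mul_of_pos_left g2 hB)
end
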